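/- Let f : [a,b] → ℝ be continuous and integrable on [a,b] with 0 ≤ a < b, let l ≥ 1, and suppose |f|^l is (α,m)-convex for some fixed (α,m) ∈ (0,1]². Then for any fixed p, q > 0, ∫_a^b (x-a)^p (b-x)^q f(x) dx ≤ (b-a)^{p+q+1} [β(p+1, q+1)]^{(l-1)/l} [β(q+α+1, p+1)|f(a)|^l + m(β(q+1, p+1) − β(q+α+1, p+1))|f(b/m)|^l]^{1/l}. -/

import Mathlib

open Real Set MeasureTheory intervalIntegral

noncomputable def beta (x y : ℝ) : ℝ := ∫ t in (0:ℝ)..1, t ^ (x-1) * (1-t) ^ (y-1)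

def AMConvexOn (s : Set ℝ) (α m : ℝ) (g : ℝ → ℝ) : Prop :=
  ∀ x ∈ s, ∀ y ∈ s, ∀ t ∈ Set.Icc (0:ℝ) 1, g (t*x + m*(1-t)*y) ≤ t ^ α * g x + m*(1 - t ^ α) * g y

lemma beta_symm_aux (u v : ℝ) :
    (∫ t in (0:ℝ)..1, t ^ u * (1-t) ^ v) = ∫ t in (0:ℝ)..1, t ^ v * (1-t) ^ u := by
  have h := intervalIntegral.integral_comp_sub_left (a := (0:ℝ)) (b := 1)
    (fun t => t ^ v * (1-t) ^ u) 1
  simp only [sub_zero, sub_self] at h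
  rw [← h]
  apply intervalIntegral.integral_congr
  intro t _
  simp only [sub_sub_cancel]
  ring

lemma beta_eq (c d : ℝ) : beta (d+1) (c+1) = ∫ t in (0:ℝ)..1, t ^ c * (1-t) ^ d := by
  unfold beta
  simp only [add_sub_cancel_right]
  exact (beta_symm_aux c d).symm

theorem stmt9 (a b p q : ℝ) (f : ℝ → ℝ)
    (ha : 0 ≤ a) (hab : a < b) (hp : 0 < p) (hq : 0 < q)
    (hcont : ContinuousOn f (Set.Icc a b))
    (hint : IntervalIntegrable f volume a b)
    (l : ℝ) (hl : 1 ≤ l)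
    (α m : ℝ) (hα : α ∈ Set.Ioc (0:ℝ) 1) (hm : m ∈ Set.Ioc (0:ℝ) 1)
    (hf : AMConvexOn (Set.Icc 0 (b/m)) α m (fun x => |f x| ^ l)) :
    ∫ x in a..b, (x-a)^p * (b-x)^q * f x
      ≤ (b-a)^(p+q+1) * (beta (p+1) (q+1))^((l-1)/l)
          * (beta (q+α+1) (p+1) * |f a| ^ l
              + m * (beta (q+1) (p+1) - beta (q+α+1) (p+1)) * |f (b/m)| ^ l) ^ (1/l) := by
  obtain ⟨hα0, hα1⟩ := hα
  obtain ⟨hm0, hm1⟩ := hm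
  have hl0 : (0:ℝ) < l := lt_of_lt_of_le one_pos hl
  have hb : 0 < b := lt_of_le_of_lt ha hab
  have hba : 0 < b - a := sub_pos.2 hab
  have hbm : b ≤ b / m := le_div_iff₀ hm0 |>.2 (by nlinarith)
  set φ : ℝ → ℝ := fun t => a + (b - a) * t with hφ
  set w : ℝ → ℝ := fun t => t ^ p * (1 - t) ^ q with hwdef
  -- basic positivity of w on Icc 0 1
  have hw_nonneg : ∀ t ∈ Icc (0:ℝ) 1, 0 ≤ w t := by
    intro t ht
    exact mul_nonneg (Real.rpow_nonneg ht.1 p) (Real.rpow_nonneg (by linarith [ht.2]) q)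
  have hw_le_one : ∀ t ∈ Icc (0:ℝ) 1, w t ≤ 1 := by
    intro t ht
    have h1 : t ^ p ≤ 1 := Real.rpow_le_one ht.1 ht.2 hp.le
    have h2 : (1-t) ^ q ≤ 1 := Real.rpow_le_one (by linarith [ht.2]) (by linarith [ht.1]) hq.le
    show t ^ p * (1 - t) ^ q ≤ 1
    nlinarith [Real.rpow_nonneg ht.1 p, Real.rpow_nonneg (show (0:ℝ) ≤ 1 - t by linarith [ht.2]) q]
  -- continuity
  have hφc : Continuous φ := by fun_prop
  have hφmap : MapsTo φ (Icc 0 1) (Icc a b) := by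
    intro t ht
    simp only [hφ]
    constructor
    · nlinarith [ht.1, ht.2]
    · nlinarith [ht.1, ht.2]
  have hfφ : ContinuousOn (fun t => f (φ t)) (Icc 0 1) :=
    hcont.comp hφc.continuousOn hφmap
  have hG : ContinuousOn (fun t => |f (φ t)|) (Icc 0 1) := hfφ.abs
  have hwc : ContinuousOn w (Icc 0 1) := by
    apply ContinuousOn.mul
    · exact continuousOn_id.rpow_const (fun x _ => Or.inr hp.le)
    · exact (continuousOn_const.sub continuousOn_id).rpow_const (fun x _ => Or.inr hq.le)
  have hGl : ContinuousOn (fun t => |f (φ t)| ^ l) (Icc 0 1) :=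
    hG.rpow_const (fun x _ => Or.inr hl0.le)
  have hint_wf : IntervalIntegrable (fun t => w t * f (φ t)) volume 0 1 :=
    (hwc.mul hfφ).intervalIntegrable_of_Icc zero_le_one
  have hint_wG : IntervalIntegrable (fun t => w t * |f (φ t)|) volume 0 1 :=
    (hwc.mul hG).intervalIntegrable_of_Icc zero_le_one
  have hint_wGl : IntervalIntegrable (fun t => w t * |f (φ t)| ^ l) volume 0 1 :=
    (hwc.mul hGl).intervalIntegrable_of_Icc zero_le_one
  have hint_w : IntervalIntegrable w volume 0 1 :=
    hwc.intervalIntegrable_of_Icc zero_le_one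
  -- Step A : change of variables
  have stepA : (∫ x in a..b, (x-a)^p * (b-x)^q * f x)
      = (b-a)^(p+q+1) * ∫ t in (0:ℝ)..1, w t * f (φ t) := by
    have key := intervalIntegral.integral_comp_mul_add
      (a := (0:ℝ)) (b := 1) (fun x => (x-a)^p * (b-x)^q * f x) hba.ne' a
    have h0 : (b-a) * 0 + a = a := by ring
    have h1 : (b-a) * 1 + a = b := by ring
    rw [h0, h1] at key
    have key2 : (∫ t in (0:ℝ)..1, ((b-a)*t + a - a)^p * (b - ((b-a)*t + a))^q * f ((b-a)*t + a))
        = (b-a)^p * (b-a)^q * ∫ t in (0:ℝ)..1, w t * f (φ t) := by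
      rw [← intervalIntegral.integral_const_mul]
      apply intervalIntegral.integral_congr
      intro t ht
      rw [Set.uIcc_of_le zero_le_one] at ht
      show ((b-a)*t + a - a)^p * (b - ((b-a)*t + a))^q * f ((b-a)*t + a)
        = (b-a)^p * (b-a)^q * (w t * f (φ t))
      have e1 : (b-a)*t + a - a = (b-a)*t := by ring
      have e2 : b - ((b-a)*t + a) = (b-a)*(1-t) := by ring
      have e3 : (b-a)*t + a = φ t := by simp only [hφ]; ring
      rw [e1, e2, e3, Real.mul_rpow hba.le ht.1, Real.mul_rpow hba.le (by linarith [ht.2])]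
      simp only [hwdef]
      ring
    rw [key2] at key
    have hpow : (b-a)^(p+q+1) = (b-a)^p * (b-a)^q * (b-a) := by
      rw [Real.rpow_add hba, Real.rpow_add hba, Real.rpow_one]
    rw [hpow]
    simp only [smul_eq_mul] at key
    field_simp at key
    linear_combination -key
  -- Step B : bound by absolute values
  have stepB : (∫ t in (0:ℝ)..1, w t * f (φ t)) ≤ ∫ t in (0:ℝ)..1, w t * |f (φ t)| := by
    apply intervalIntegral.integral_mono_on zero_le_one hint_wf hint_wG
    intro t ht
    exact mul_le_mul_of_nonneg_left (le_abs_self _) (hw_nonneg t ht)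
  have hK_nonneg : 0 ≤ ∫ t in (0:ℝ)..1, w t * |f (φ t)| ^ l :=
    intervalIntegral.integral_nonneg zero_le_one (fun t ht =>
      mul_nonneg (hw_nonneg t ht) (Real.rpow_nonneg (abs_nonneg _) l))
  have hW_nonneg : 0 ≤ ∫ t in (0:ℝ)..1, w t :=
    intervalIntegral.integral_nonneg zero_le_one hw_nonneg
  -- Step C : Hölder inequality
  have stepC : (∫ t in (0:ℝ)..1, w t * |f (φ t)|)
      ≤ (∫ t in (0:ℝ)..1, w t) ^ ((l-1)/l)
        * (∫ t in (0:ℝ)..1, w t * |f (φ t)| ^ l) ^ (1/l) := by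
    rcases eq_or_lt_of_le hl with hl1 | hl1
    · rw [← hl1]
      simp only [Real.rpow_one, sub_self, zero_div, Real.rpow_zero, one_mul, div_one]
      exact le_rfl
    · -- case 1 < l
      set r := l / (l - 1) with hr
      have hlm1 : (0:ℝ) < l - 1 := by linarith
      have hr0 : (0:ℝ) < r := by positivity
      have hconj : r.HolderConjugate l := by
        exact ((Real.holderConjugate_iff_eq_conjExponent hl1).2 hr).symm
      have hrinv : 1/r = (l-1)/l := by rw [hr, one_div_div]
      have hrmul : (1/r) * r = 1 := by field_simp
      set μ : Measure ℝ := volume.restrict (Ioc (0:ℝ) 1) with hμ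
      haveI : IsFiniteMeasure μ := by
        constructor
        rw [hμ, Measure.restrict_apply_univ, Real.volume_Ioc]
        exact ENNReal.ofReal_lt_top
      obtain ⟨M, hM⟩ := isCompact_Icc.exists_bound_of_continuousOn hcont
      set F : ℝ → ℝ := fun t => w t ^ (1/r) with hF
      set G : ℝ → ℝ := fun t => w t ^ (1/l) * |f (φ t)| with hGdef
      have hsub : Ioc (0:ℝ) 1 ⊆ Icc 0 1 := Ioc_subset_Icc_self
      have hFc : ContinuousOn F (Icc 0 1) :=
        hwc.rpow_const (fun x _ => Or.inr (by positivity))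
      have hGc : ContinuousOn G (Icc 0 1) :=
        (hwc.rpow_const (fun x _ => Or.inr (by positivity))).mul hG
      have hnn1 : 0 ≤ᵐ[μ] F := by
        filter_upwards [ae_restrict_mem measurableSet_Ioc] with t ht
        exact Real.rpow_nonneg (hw_nonneg t (hsub ht)) _
      have hnn2 : 0 ≤ᵐ[μ] G := by
        filter_upwards [ae_restrict_mem measurableSet_Ioc] with t ht
        exact mul_nonneg (Real.rpow_nonneg (hw_nonneg t (hsub ht)) _) (abs_nonneg _)
      have hmem1 : MemLp F (ENNReal.ofReal r) μ := by
        apply MemLp.of_bound ((hFc.mono hsub).aestronglyMeasurable measurableSet_Ioc) 1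
        filter_upwards [ae_restrict_mem measurableSet_Ioc] with t ht
        have ht' := hsub ht
        rw [Real.norm_eq_abs, abs_of_nonneg (Real.rpow_nonneg (hw_nonneg t ht') _)]
        exact Real.rpow_le_one (hw_nonneg t ht') (hw_le_one t ht') (by positivity)
      have hmem2 : MemLp G (ENNReal.ofReal l) μ := by
        apply MemLp.of_bound ((hGc.mono hsub).aestronglyMeasurable measurableSet_Ioc) M
        filter_upwards [ae_restrict_mem measurableSet_Ioc] with t ht
        have ht' := hsub ht
        have h1 : w t ^ (1/l) ≤ 1 :=
          Real.rpow_le_one (hw_nonneg t ht') (hw_le_one t ht') (by positivity)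
        have h2 : |f (φ t)| ≤ M := by
          have := hM (φ t) (hφmap ht')
          rwa [Real.norm_eq_abs] at this
        rw [Real.norm_eq_abs,
          abs_of_nonneg (mul_nonneg (Real.rpow_nonneg (hw_nonneg t ht') _) (abs_nonneg _))]
        calc w t ^ (1/l) * |f (φ t)| ≤ 1 * |f (φ t)| :=
              mul_le_mul_of_nonneg_right h1 (abs_nonneg _)
          _ = |f (φ t)| := one_mul _
          _ ≤ M := h2
      have H := MeasureTheory.integral_mul_le_Lp_mul_Lq_of_nonneg (μ := μ) hconj
        hnn1 hnn2 hmem1 hmem2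
      have eq1 : (∫ t, F t * G t ∂μ) = ∫ t, w t * |f (φ t)| ∂μ := by
        apply setIntegral_congr_fun measurableSet_Ioc
        intro t ht
        have ht' := hsub ht
        have hsum : 1/r + 1/l = 1 := by
          rw [one_div, one_div]; exact hconj.inv_add_inv_eq_one
        simp only [hF, hGdef]
        calc w t ^ (1/r) * (w t ^ (1/l) * |f (φ t)|)
            = (w t ^ (1/r) * w t ^ (1/l)) * |f (φ t)| := by ring
          _ = w t ^ (1/r + 1/l) * |f (φ t)| := by
              rw [← Real.rpow_add' (hw_nonneg t ht') (by rw [hsum]; norm_num)]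
          _ = w t * |f (φ t)| := by rw [hsum, Real.rpow_one]
      have eq2 : (∫ t, F t ^ r ∂μ) = ∫ t, w t ∂μ := by
        apply setIntegral_congr_fun measurableSet_Ioc
        intro t ht
        have ht' := hsub ht
        simp only [hF]
        rw [← Real.rpow_mul (hw_nonneg t ht'), hrmul, Real.rpow_one]
      have eq3 : (∫ t, G t ^ l ∂μ) = ∫ t, w t * |f (φ t)| ^ l ∂μ := by
        apply setIntegral_congr_fun measurableSet_Ioc
        intro t ht
        have ht' := hsub ht
        simp only [hGdef]
        rw [Real.mul_rpow (Real.rpow_nonneg (hw_nonneg t ht') _) (abs_nonneg _),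
          ← Real.rpow_mul (hw_nonneg t ht'), one_div_mul_cancel hl0.ne', Real.rpow_one]
      rw [eq1, eq2, eq3, hrinv] at H
      rw [intervalIntegral.integral_of_le zero_le_one,
        intervalIntegral.integral_of_le zero_le_one,
        intervalIntegral.integral_of_le zero_le_one]
      exact H
  -- Step D : convexity bound
  have hconv : ∀ t ∈ Icc (0:ℝ) 1, w t * |f (φ t)| ^ l
      ≤ |f a| ^ l * (t ^ p * (1-t) ^ (q+α))
        + m * |f (b/m)| ^ l * (t ^ p * (1-t) ^ q - t ^ p * (1-t) ^ (q+α)) := by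
    intro t ht
    have h1t : (1:ℝ) - t ∈ Icc (0:ℝ) 1 := ⟨by linarith [ht.2], by linarith [ht.1]⟩
    have hmem_a : a ∈ Icc (0:ℝ) (b/m) := ⟨ha, le_trans hab.le hbm⟩
    have hmem_bm : b/m ∈ Icc (0:ℝ) (b/m) := ⟨by positivity, le_rfl⟩
    have hcx := hf a hmem_a (b/m) hmem_bm (1-t) h1t
    have harg : (1-t)*a + m*(1-(1-t))*(b/m) = φ t := by
      simp only [hφ]
      field_simp
      ring
    rw [harg] at hcx
    simp only at hcx
    have hkey : w t * |f (φ t)| ^ l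
        ≤ w t * ((1-t)^α * |f a|^l + m * (1 - (1-t)^α) * |f (b/m)|^l) :=
      mul_le_mul_of_nonneg_left hcx (hw_nonneg t ht)
    refine le_trans hkey (le_of_eq ?_)
    have hq' : (1-t) ^ (q+α) = (1-t) ^ q * (1-t) ^ α :=
      Real.rpow_add' (by linarith [ht.2]) (by positivity)
    simp only [hwdef]
    rw [hq']
    ring
  have hint_wα : IntervalIntegrable (fun t => t ^ p * (1-t) ^ (q+α)) volume 0 1 := by
    apply ContinuousOn.intervalIntegrable_of_Icc zero_le_one
    apply ContinuousOn.mul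
    · exact continuousOn_id.rpow_const (fun x _ => Or.inr hp.le)
    · exact (continuousOn_const.sub continuousOn_id).rpow_const
        (fun x _ => Or.inr (by positivity))
  have hint_big : IntervalIntegrable (fun t => |f a| ^ l * (t ^ p * (1-t) ^ (q+α))
      + m * |f (b/m)| ^ l * (t ^ p * (1-t) ^ q - t ^ p * (1-t) ^ (q+α))) volume 0 1 :=
    (hint_wα.const_mul _).add ((hint_w.sub hint_wα).const_mul _)
  have stepD : (∫ t in (0:ℝ)..1, w t * |f (φ t)| ^ l)
      ≤ beta (q+α+1) (p+1) * |f a| ^ l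
        + m * (beta (q+1) (p+1) - beta (q+α+1) (p+1)) * |f (b/m)| ^ l := by
    refine le_trans
      (intervalIntegral.integral_mono_on zero_le_one hint_wGl hint_big hconv) (le_of_eq ?_)
    rw [intervalIntegral.integral_add (hint_wα.const_mul _) ((hint_w.sub hint_wα).const_mul _),
      intervalIntegral.integral_const_mul, intervalIntegral.integral_const_mul,
      intervalIntegral.integral_sub hint_w hint_wα]
    have e1 : (∫ t in (0:ℝ)..1, t ^ p * (1-t) ^ (q+α)) = beta (q+α+1) (p+1) :=
      (beta_eq p (q+α)).symm
    have e2 : (∫ t in (0:ℝ)..1, w t) = beta (q+1) (p+1) := by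
      simp only [hwdef]
      exact (beta_eq p q).symm
    rw [e1]
    simp only [hwdef] at e2
    rw [e2]
    ring
  -- assembly
  have hbeta1 : beta (p+1) (q+1) = ∫ t in (0:ℝ)..1, w t := by
    unfold beta
    simp only [add_sub_cancel_right, hwdef]
  have hC : (0:ℝ) ≤ (b-a)^(p+q+1) := Real.rpow_nonneg hba.le _
  rw [stepA]
  calc (b-a)^(p+q+1) * ∫ t in (0:ℝ)..1, w t * f (φ t)
      ≤ (b-a)^(p+q+1) * ∫ t in (0:ℝ)..1, w t * |f (φ t)| :=
        mul_le_mul_of_nonneg_left stepB hC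
    _ ≤ (b-a)^(p+q+1) * ((∫ t in (0:ℝ)..1, w t) ^ ((l-1)/l)
          * (∫ t in (0:ℝ)..1, w t * |f (φ t)| ^ l) ^ (1/l)) :=
        mul_le_mul_of_nonneg_left stepC hC
    _ ≤ (b-a)^(p+q+1) * ((∫ t in (0:ℝ)..1, w t) ^ ((l-1)/l)
          * (beta (q+α+1) (p+1) * |f a| ^ l
              + m * (beta (q+1) (p+1) - beta (q+α+1) (p+1)) * |f (b/m)| ^ l) ^ (1/l)) := by
        apply mul_le_mul_of_nonneg_left _ hC
        apply mul_le_mul_of_nonneg_left _ (Real.rpow_nonneg hW_nonneg _)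
        exact Real.rpow_le_rpow hK_nonneg stepD (by positivity)
    _ = (b-a)^(p+q+1) * (beta (p+1) (q+1))^((l-1)/l)
          * (beta (q+α+1) (p+1) * |f a| ^ l
              + m * (beta (q+1) (p+1) - beta (q+α+1) (p+1)) * |f (b/m)| ^ l) ^ (1/l) := by
        rw [hbeta1]
        ring
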